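/- The family of increment distributions of the process 𝒥 is consistent: for 0 < s < t < u ≤ 1, if X is 0 with probability s/t and exponential with mean t/π with probability 1 - s/t, and Y (independent of X) is 0 with probability t/u and exponential with mean u/π with probability 1 - t/u, then X + Y is 0 with probability s/u and exponential with mean u/π with probability 1 - s/u. -/

import Mathlib

open MeasureTheory ProbabilityTheory Real

/-- The increment distribution `μ_{a,b} = (a/b)·δ₀ + (1 - a/b)·Exp(π/b)` of the process `𝒥`. -/
noncomputable def incMeasure (a b : ℝ) : Measure ℝ :=
  ENNReal.ofReal (a / b) • Measure.dirac 0 +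
    ENNReal.ofReal (1 - a / b) • expMeasure (π / b)

open Set
open scoped ENNReal NNReal

lemma conv_Iic (μ ν : Measure ℝ) [SFinite μ] [SFinite ν] (x : ℝ) :
    (Measure.conv μ ν) (Set.Iic x) = ∫⁻ a, ν (Set.Iic (x - a)) ∂μ := by
  rw [Measure.conv, Measure.map_apply (by fun_prop) measurableSet_Iic]
  have hms : MeasurableSet ((fun p : ℝ × ℝ => p.1 + p.2) ⁻¹' Iic x) :=
    (by fun_prop : Measurable fun p : ℝ × ℝ => p.1 + p.2) measurableSet_Iic
  rw [Measure.prod_apply hms]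
  refine lintegral_congr fun a => ?_
  congr 1
  ext y
  simp [le_sub_iff_add_le']

private lemma incMeasure_Iic {a b : ℝ} (ha : 0 ≤ a) (hab : a ≤ b) (hb : 0 < b) (x : ℝ) :
    incMeasure a b (Set.Iic x) =
      ENNReal.ofReal (if 0 ≤ x then 1 - (1 - a / b) * rexp (-(π / b * x)) else 0) := by
  have hr : 0 < π / b := div_pos pi_pos hb
  have hab1 : a / b ≤ 1 := (div_le_one hb).2 hab
  have hab0 : 0 ≤ a / b := div_nonneg ha hb.le
  rw [incMeasure, Measure.add_apply, Measure.smul_apply, Measure.smul_apply, smul_eq_mul,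
    smul_eq_mul, Measure.dirac_apply' _ measurableSet_Iic]
  have hexp : expMeasure (π / b) (Set.Iic x) =
      ENNReal.ofReal (if 0 ≤ x then 1 - rexp (-(π / b * x)) else 0) := by
    rw [expMeasure, gammaMeasure, withDensity_apply _ measurableSet_Iic]
    rw [show gammaPDF 1 (π / b) = exponentialPDF (π / b) from rfl]
    exact lintegral_exponentialPDF_eq_antiDeriv hr x
  rw [hexp]
  by_cases hx : 0 ≤ x
  · have h0 : (0:ℝ) ∈ Iic x := hx
    simp only [if_pos hx, Set.indicator_of_mem h0, Pi.one_apply, mul_one]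
    rw [← ENNReal.ofReal_mul (by linarith), ← ENNReal.ofReal_add hab0]
    · ring_nf
    · have h1 : rexp (-(π / b * x)) ≤ 1 :=
        exp_le_one_iff.2 (by nlinarith [mul_nonneg hr.le hx])
      nlinarith
  · have h0 : (0:ℝ) ∉ Iic x := by simpa using hx
    simp [if_neg hx, Set.indicator_of_notMem h0]
lemma key {A B C x : ℝ} (hB : 0 < B) (hBA : B < A) (hC0 : 0 ≤ C) (hC1 : C ≤ 1)
    (hC : C * A = A - B) :
    ∫⁻ y, exponentialPDF A y *
        ENNReal.ofReal (if 0 ≤ x - y then 1 - C * rexp (-(B * (x - y))) else 0)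
      = ENNReal.ofReal (if 0 ≤ x then 1 - rexp (-(B * x)) else 0) := by
  have hA : 0 < A := hB.trans hBA
  by_cases hx : 0 ≤ x
  swap
  · rw [if_neg hx]
    simp only [ENNReal.ofReal_zero]
    rw [← lintegral_zero]
    refine lintegral_congr fun y => ?_
    rcases lt_or_ge y 0 with hy | hy
    · rw [exponentialPDF_of_neg hy, zero_mul]
    · rw [if_neg (by linarith), ENNReal.ofReal_zero, mul_zero]
  rw [if_pos hx]
  set h : ℝ → ℝ := fun y => A * rexp (-(A * y)) * (1 - C * rexp (-(B * (x - y)))) with hh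
  have hcont : Continuous h := by fun_prop
  have hind : (fun y => exponentialPDF A y *
      ENNReal.ofReal (if 0 ≤ x - y then 1 - C * rexp (-(B * (x - y))) else 0))
      = (Icc 0 x).indicator (fun y => ENNReal.ofReal (h y)) := by
    funext y
    by_cases hy : y ∈ Icc 0 x
    · rw [indicator_of_mem hy, exponentialPDF_of_nonneg hy.1, if_pos (by linarith [hy.2]),
        ← ENNReal.ofReal_mul (by positivity)]
    · rw [indicator_of_notMem hy]
      rcases not_and_or.mp hy with hy1 | hy2
      · rw [exponentialPDF_of_neg (lt_of_not_ge hy1), zero_mul]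
      · rw [if_neg (by push_neg at hy2 ⊢; linarith), ENNReal.ofReal_zero,
          mul_zero]
  rw [show (∫⁻ y, exponentialPDF A y *
      ENNReal.ofReal (if 0 ≤ x - y then 1 - C * rexp (-(B * (x - y))) else 0))
      = ∫⁻ y, (Icc 0 x).indicator (fun y => ENNReal.ofReal (h y)) y from
      lintegral_congr fun y => congrFun hind y,
    lintegral_indicator measurableSet_Icc _]
  have hnn : 0 ≤ᵐ[volume.restrict (Icc 0 x)] h := by
    refine (ae_restrict_iff' measurableSet_Icc).2 (ae_of_all _ fun y hy => ?_)
    have h1 : rexp (-(B * (x - y))) ≤ 1 :=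
      exp_le_one_iff.2 (by nlinarith [hy.1, hy.2, hB.le])
    have h2 : C * rexp (-(B * (x - y))) ≤ 1 :=
      le_trans (by nlinarith [exp_pos (-(B * (x - y)))]) hC1
    have := exp_pos (-(A * y))
    exact mul_nonneg (by positivity) (by linarith)
  rw [← ofReal_integral_eq_lintegral_ofReal (hcont.integrableOn_Icc) hnn]
  congr 1
  rw [integral_Icc_eq_integral_Ioc, ← intervalIntegral.integral_of_le hx]
  have hftc : ∀ y ∈ uIcc 0 x, HasDerivAt
      (fun y => -rexp (-(A * y)) + rexp (-(B * x)) * rexp ((B - A) * y)) (h y) y := by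
    intro y _
    have d1 : HasDerivAt (fun y => -rexp (-(A * y))) (A * rexp (-(A * y))) y := by
      have := (((hasDerivAt_id y).const_mul (-A)).exp).neg
      simpa [neg_mul, mul_comm, Pi.neg_def] using this
    have d2 : HasDerivAt (fun y => rexp (-(B * x)) * rexp ((B - A) * y))
        (rexp (-(B * x)) * ((B - A) * rexp ((B - A) * y))) y := by
      have := (((hasDerivAt_id y).const_mul (B - A)).exp).const_mul (rexp (-(B * x)))
      simpa [mul_comm] using this
    refine (d1.add d2).congr_deriv ?_
    have hexp : rexp (-(A * y)) * rexp (-(B * (x - y))) = rexp (-(B * x)) * rexp ((B - A) * y) := by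
      rw [← exp_add, ← exp_add]; ring_nf
    show _ = A * rexp (-(A * y)) * (1 - C * rexp (-(B * (x - y))))
    linear_combination (C * A) * hexp + (rexp (-(B * x)) * rexp ((B - A) * y)) * hC
  rw [intervalIntegral.integral_eq_sub_of_hasDerivAt hftc
    ((hcont.intervalIntegrable 0 x))]
  have hexp2 : rexp (-(B * x)) * rexp ((B - A) * x) = rexp (-(A * x)) := by
    rw [← exp_add]; ring_nf
  simp only [mul_zero, neg_zero, exp_zero, mul_one]
  linarith

lemma incMeasure_finite {a b : ℝ} (hb : 0 < b) : IsFiniteMeasure (incMeasure a b) := by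
  have : IsProbabilityMeasure (expMeasure (π / b)) :=
    isProbabilityMeasure_expMeasure (div_pos pi_pos hb)
  constructor
  rw [incMeasure]
  simp only [Measure.add_apply, Measure.smul_apply, smul_eq_mul, measure_univ, mul_one]
  exact ENNReal.add_lt_top.2 ⟨ENNReal.ofReal_lt_top, ENNReal.ofReal_lt_top⟩

/-- Consistency of the increment distributions of `𝒥`:
`μ_{s,t} ∗ μ_{t,u} = μ_{s,u}` for `0 < s < t < u ≤ 1`. -/
theorem incMeasure_conv_consistent (s t u : ℝ) (hs : 0 < s) (hst : s < t) (htu : t < u)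
    (hu1 : u ≤ 1) :
    Measure.conv (incMeasure s t) (incMeasure t u) = incMeasure s u := by
  have ht : 0 < t := hs.trans hst
  have hu : 0 < u := ht.trans htu
  have h1 : IsFiniteMeasure (incMeasure s t) := incMeasure_finite ht
  have h2 : IsFiniteMeasure (incMeasure t u) := incMeasure_finite hu
  refine Measure.ext_of_Iic _ _ fun x => ?_
  rw [conv_Iic, incMeasure_Iic hs.le (by linarith) hu]
  have step1 : ∫⁻ a, incMeasure t u (Iic (x - a)) ∂(incMeasure s t)
      = ∫⁻ a, ENNReal.ofReal
          (if 0 ≤ x - a then 1 - (1 - t / u) * rexp (-(π / u * (x - a))) else 0)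
          ∂(incMeasure s t) :=
    lintegral_congr fun a => by rw [incMeasure_Iic ht.le (by linarith) hu]
  rw [step1]
  set g : ℝ → ℝ≥0∞ := fun a => ENNReal.ofReal
      (if 0 ≤ x - a then 1 - (1 - t / u) * rexp (-(π / u * (x - a))) else 0) with hg
  have hgm : Measurable g := by
    apply Measurable.ennreal_ofReal
    apply Measurable.ite (measurableSet_le measurable_const (by fun_prop)) <;> fun_prop
  rw [show incMeasure s t = ENNReal.ofReal (s / t) • Measure.dirac 0 +
      ENNReal.ofReal (1 - s / t) • expMeasure (π / t) from rfl,
    lintegral_add_measure, lintegral_smul_measure, lintegral_smul_measure, lintegral_dirac,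
    expMeasure, gammaMeasure,
    lintegral_withDensity_eq_lintegral_mul _
      (show Measurable (gammaPDF 1 (π / t)) from
        (measurable_gammaPDFReal 1 (π / t)).ennreal_ofReal) hgm]
  have hkey : ∫⁻ a, (gammaPDF 1 (π / t) * g) a = ENNReal.ofReal
      (if 0 ≤ x then 1 - rexp (-(π / u * x)) else 0) := by
    rw [show gammaPDF 1 (π / t) = exponentialPDF (π / t) from rfl]
    have hBA : π / u < π / t := div_lt_div_of_pos_left pi_pos ht htu
    have hC : (1 - t / u) * (π / t) = π / t - π / u := by field_simp
    have := key (x := x) (div_pos pi_pos hu) hBA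
      (by have h' : t / u ≤ 1 := (div_le_one hu).2 htu.le; linarith)
      (by have h' : 0 < t / u := div_pos ht hu; linarith) hC
    simpa [hg, Pi.mul_apply] using this
  rw [hkey]
  simp only [hg, sub_zero]
  by_cases hx : 0 ≤ x
  · rw [if_pos hx, if_pos hx, if_pos hx]
    have hE1 : rexp (-(π / u * x)) ≤ 1 :=
      exp_le_one_iff.2 (by nlinarith [div_pos pi_pos hu, mul_nonneg (div_pos pi_pos hu).le hx])
    have hE0 : 0 < rexp (-(π / u * x)) := exp_pos _
    have htu1 : t / u ≤ 1 := (div_le_one hu).2 htu.le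
    have hst1 : s / t ≤ 1 := (div_le_one ht).2 hst.le
    have hmul : (1 - t / u) * rexp (-(π / u * x)) ≤ 1 :=
      mul_le_one₀ (sub_le_self 1 (by positivity)) hE0.le hE1
    have h1' : 0 ≤ 1 - (1 - t / u) * rexp (-(π / u * x)) := by linarith
    have h2' : 0 ≤ 1 - rexp (-(π / u * x)) := by linarith
    rw [smul_eq_mul, smul_eq_mul]
    rw [← ENNReal.ofReal_mul (by positivity), ← ENNReal.ofReal_mul (by linarith),
      ← ENNReal.ofReal_add (mul_nonneg (by positivity) h1') (mul_nonneg (by linarith) h2')]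
    congr 1
    field_simp
    ring
  · rw [if_neg hx, if_neg hx, if_neg hx]
    simp
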